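/- Optimality of the squared-conditional-expectation profile for Hellinger: with dπ = ℓ dμ, ∫ℓ dμ = 1, and orthonormal U_r, among measures dν ∝ g(U_r^T x) dμ(x), the squared Hellinger distance d_H²(π, ν) is minimized by g(θ) = (E_{X∼μ}[√ℓ(X) | U_r^T X = θ])². -/

import Mathlib

open Matrix MeasureTheory

private lemma aux_int_mul {α : Type*} [MeasurableSpace α] {μ : Measure α} {f g : α → ℝ}
    (hfm : AEStronglyMeasurable f μ) (hgm : AEStronglyMeasurable g μ)
    (hf2 : Integrable (fun x => f x ^ 2) μ) (hg2 : Integrable (fun x => g x ^ 2) μ) :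
    Integrable (fun x => f x * g x) μ := by
  refine Integrable.mono' ((hf2.add hg2).div_const 2) (hfm.mul hgm) ?_
  filter_upwards with x
  simp only [Pi.add_apply]
  rw [Real.norm_eq_abs, abs_mul]
  nlinarith [sq_nonneg (|f x| - |g x|), sq_abs (f x), sq_abs (g x),
    abs_nonneg (f x), abs_nonneg (g x)]

private def sigmaT (d r : ℕ) (Ur : Matrix (Fin d) (Fin r) ℝ) : MeasurableSpace (Fin d → ℝ) :=
  MeasurableSpace.comap (fun x => Urᵀ *ᵥ x) inferInstance

private lemma aux_expand {α : Type*} [MeasurableSpace α] {μ : Measure α} {ℓ h : α → ℝ}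
    (hℓ0 : ∀ x, 0 ≤ ℓ x) (hh0 : ∀ x, 0 ≤ h x)
    (hℓi : Integrable ℓ μ) (hhi : Integrable h μ)
    (hsq : Integrable (fun x => (Real.sqrt (ℓ x) - Real.sqrt (h x)) ^ 2) μ) :
    ∫ x, (Real.sqrt (ℓ x) - Real.sqrt (h x)) ^ 2 ∂μ
      = (∫ x, ℓ x ∂μ) + (∫ x, h x ∂μ)
        - 2 * ∫ x, Real.sqrt (ℓ x) * Real.sqrt (h x) ∂μ := by
  have key : ∀ x, (Real.sqrt (ℓ x) - Real.sqrt (h x)) ^ 2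
      = ℓ x + h x - 2 * (Real.sqrt (ℓ x) * Real.sqrt (h x)) := by
    intro x
    have h1 : Real.sqrt (ℓ x) ^ 2 = ℓ x := Real.sq_sqrt (hℓ0 x)
    have h2 : Real.sqrt (h x) ^ 2 = h x := Real.sq_sqrt (hh0 x)
    nlinarith [h1, h2]
  have hcross : Integrable (fun x => Real.sqrt (ℓ x) * Real.sqrt (h x)) μ := by
    have heq : (fun x => Real.sqrt (ℓ x) * Real.sqrt (h x))
        = fun x => (ℓ x + h x - (Real.sqrt (ℓ x) - Real.sqrt (h x)) ^ 2) / 2 := by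
      funext x
      rw [key x]; ring
    rw [heq]
    exact ((hℓi.add hhi).sub hsq).div_const 2
  calc ∫ x, (Real.sqrt (ℓ x) - Real.sqrt (h x)) ^ 2 ∂μ
      = ∫ x, (ℓ x + h x - 2 * (Real.sqrt (ℓ x) * Real.sqrt (h x))) ∂μ :=
        integral_congr_ae (Filter.Eventually.of_forall key)
    _ = (∫ x, (ℓ x + h x) ∂μ) - ∫ x, 2 * (Real.sqrt (ℓ x) * Real.sqrt (h x)) ∂μ :=
        integral_sub (hℓi.add hhi) (hcross.const_mul 2)
    _ = (∫ x, ℓ x ∂μ) + (∫ x, h x ∂μ)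
        - 2 * ∫ x, Real.sqrt (ℓ x) * Real.sqrt (h x) ∂μ := by
        rw [integral_add hℓi hhi, integral_const_mul]

theorem hellinger_profile_optimality (d r : ℕ)
    (μ : Measure (Fin d → ℝ)) [IsProbabilityMeasure μ]
    (Ur : Matrix (Fin d) (Fin r) ℝ) (hUr : Urᵀ * Ur = 1)
    (ℓ : (Fin d → ℝ) → ℝ) (hmeas : Measurable ℓ) (hℓpos : ∀ x, 0 ≤ ℓ x)
    (hℓint : Integrable ℓ μ) (hnorm : (∫ x, ℓ x ∂μ) = 1)
    (g : (Fin r → ℝ) → ℝ) (hgmeas : Measurable g) (hgpos : ∀ θ, 0 ≤ g θ)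
    (hgint : Integrable (fun x => g (Urᵀ *ᵥ x)) μ)
    (hZ : 0 < ∫ x, g (Urᵀ *ᵥ x) ∂μ)
    (F : (Fin d → ℝ) → ℝ)
    (hF : F = μ[(fun x => Real.sqrt (ℓ x)) |
      MeasurableSpace.comap (fun x => Urᵀ *ᵥ x) inferInstance])
    (hF2int : Integrable (fun x => (F x) ^ 2) μ)
    (hint1 : Integrable (fun x =>
      (Real.sqrt (ℓ x) - Real.sqrt ((F x) ^ 2 / (∫ y, (F y) ^ 2 ∂μ))) ^ 2) μ)
    (hint2 : Integrable (fun x =>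
      (Real.sqrt (ℓ x) - Real.sqrt (g (Urᵀ *ᵥ x) / (∫ y, g (Urᵀ *ᵥ y) ∂μ))) ^ 2) μ) :
    (1 / 2) * (∫ x, (Real.sqrt (ℓ x)
        - Real.sqrt ((F x) ^ 2 / (∫ y, (F y) ^ 2 ∂μ))) ^ 2 ∂μ)
      ≤ (1 / 2) * ∫ x, (Real.sqrt (ℓ x)
        - Real.sqrt (g (Urᵀ *ᵥ x) / (∫ y, g (Urᵀ *ᵥ y) ∂μ))) ^ 2 ∂μ := by
  classical
  have hT : Measurable (fun x : Fin d → ℝ => Urᵀ *ᵥ x) := by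
    refine measurable_pi_lambda _ fun i => ?_
    simpa [mulVec, dotProduct] using
      Finset.measurable_sum Finset.univ (fun j _ => (measurable_pi_apply j : Measurable fun x : Fin d → ℝ => x j).const_mul (Urᵀ i j))
  have hm : sigmaT d r Ur ≤ (inferInstance : MeasurableSpace (Fin d → ℝ)) := hT.comap_le
  haveI : SigmaFinite (μ.trim hm) := inferInstance
  set C : ℝ := ∫ y, (F y) ^ 2 ∂μ with hCdef
  set Z : ℝ := ∫ y, g (Urᵀ *ᵥ y) ∂μ with hZdef
  -- basic facts about √ℓ
  have hs_meas : Measurable (fun x => Real.sqrt (ℓ x)) := hmeas.sqrt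
  have hs2int : Integrable (fun x => Real.sqrt (ℓ x) ^ 2) μ := by
    have : (fun x => Real.sqrt (ℓ x) ^ 2) = ℓ := by
      funext x; exact Real.sq_sqrt (hℓpos x)
    rw [this]; exact hℓint
  have hsint : Integrable (fun x => Real.sqrt (ℓ x)) μ := by
    refine Integrable.mono' ((hℓint.add (integrable_const 1)).div_const 2)
      hs_meas.aestronglyMeasurable ?_
    filter_upwards with x
    simp only [Pi.add_apply]
    rw [Real.norm_of_nonneg (Real.sqrt_nonneg _)]
    nlinarith [Real.sq_sqrt (hℓpos x), Real.sqrt_nonneg (ℓ x), sq_nonneg (Real.sqrt (ℓ x) - 1)]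
  -- facts about F
  have hFcond : F = μ[(fun x => Real.sqrt (ℓ x)) | sigmaT d r Ur] := hF
  have hF_sm : StronglyMeasurable[sigmaT d r Ur] F := by rw [hFcond]; exact stronglyMeasurable_condExp
  have hF_meas : AEStronglyMeasurable F μ := (hF_sm.mono hm).aestronglyMeasurable
  have hF_nonneg : 0 ≤ᵐ[μ] F := by
    rw [hFcond]
    exact condExp_nonneg (Filter.Eventually.of_forall fun x => Real.sqrt_nonneg _)
  have hintF : ∫ x, F x ∂μ = ∫ x, Real.sqrt (ℓ x) ∂μ := by
    rw [hFcond]; exact integral_condExp hm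
  -- pull-out property
  have pull : ∀ φ : (Fin d → ℝ) → ℝ, StronglyMeasurable[sigmaT d r Ur] φ →
      Integrable (fun x => φ x * Real.sqrt (ℓ x)) μ →
      ∫ x, φ x * Real.sqrt (ℓ x) ∂μ = ∫ x, φ x * F x ∂μ := by
    intro φ hφ hφs
    have h1 : μ[(fun x => φ x * Real.sqrt (ℓ x)) | sigmaT d r Ur] =ᵐ[μ] fun x => φ x * F x := by
      have h2 := condExp_mul_of_stronglyMeasurable_left (μ := μ) hφ hφs hsint
      rw [hFcond]
      exact h2
    calc ∫ x, φ x * Real.sqrt (ℓ x) ∂μ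
        = ∫ x, (μ[(fun x => φ x * Real.sqrt (ℓ x)) | sigmaT d r Ur]) x ∂μ :=
          (integral_condExp hm).symm
      _ = ∫ x, φ x * F x ∂μ := integral_congr_ae h1
  -- ∫ F √ℓ = C
  have hFs_int : Integrable (fun x => F x * Real.sqrt (ℓ x)) μ :=
    aux_int_mul hF_meas hs_meas.aestronglyMeasurable hF2int hs2int
  have hFF : (fun x => F x * F x) = fun x => F x ^ 2 := by funext x; ring
  have hFs : ∫ x, F x * Real.sqrt (ℓ x) ∂μ = C := by
    rw [pull F hF_sm hFs_int, hCdef, hFF]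
  -- positivity of ∫ √ℓ
  have hs_pos : 0 < ∫ x, Real.sqrt (ℓ x) ∂μ := by
    rcases lt_or_ge 0 (∫ x, Real.sqrt (ℓ x) ∂μ) with h | h
    · exact h
    · exfalso
      have h0 : ∫ x, Real.sqrt (ℓ x) ∂μ = 0 :=
        le_antisymm h (integral_nonneg fun x => Real.sqrt_nonneg _)
      have hs0 : (fun x => Real.sqrt (ℓ x)) =ᵐ[μ] 0 :=
        (integral_eq_zero_iff_of_nonneg (fun x => Real.sqrt_nonneg _) hsint).mp h0
      have hl0 : ℓ =ᵐ[μ] 0 := by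
        filter_upwards [hs0] with x hx
        have h2 := Real.sq_sqrt (hℓpos x)
        simp only [Pi.zero_apply] at hx ⊢
        rw [← h2, hx]
        norm_num
      rw [integral_congr_ae hl0] at hnorm
      simp at hnorm
  have h22 : (2 : ℝ).HolderConjugate 2 := ⟨by norm_num, by norm_num, by norm_num⟩
  have hofReal2 : ENNReal.ofReal (2:ℝ) = 2 := by norm_num
  have hsL2 : MemLp (fun x => Real.sqrt (ℓ x)) (ENNReal.ofReal 2) μ := by
    rw [hofReal2]
    exact (memLp_two_iff_integrable_sq hs_meas.aestronglyMeasurable).mpr hs2int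
  have hFL2 : MemLp F (ENNReal.ofReal 2) μ := by
    rw [hofReal2]
    exact (memLp_two_iff_integrable_sq hF_meas).mpr hF2int
  have rpow_two : ∀ f : (Fin d → ℝ) → ℝ,
      (∫ x, f x ^ (2:ℝ) ∂μ) = ∫ x, f x ^ (2:ℕ) ∂μ := by
    intro f
    refine integral_congr_ae (Filter.Eventually.of_forall fun x => ?_)
    exact_mod_cast Real.rpow_two (f x)
  -- C > 0
  have hC_pos : 0 < C := by
    rcases (integral_nonneg fun x => sq_nonneg (F x) : (0:ℝ) ≤ C).lt_or_eq with h | h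
    · exact h
    · exfalso
      have hF20 : (fun x => F x ^ 2) =ᵐ[μ] 0 :=
        (integral_eq_zero_iff_of_nonneg (fun x => sq_nonneg (F x)) hF2int).mp h.symm
      have hF0 : F =ᵐ[μ] 0 := by
        filter_upwards [hF20] with x hx
        simp only [Pi.zero_apply] at hx ⊢
        exact pow_eq_zero_iff (two_ne_zero) |>.mp hx
      have : ∫ x, F x ∂μ = 0 := by
        rw [integral_congr_ae hF0]; simp
      rw [hintF] at this
      exact hs_pos.ne' this
  -- facts about √(g ∘ T)
  have hgT_meas : Measurable (fun x : Fin d → ℝ => Real.sqrt (g (Urᵀ *ᵥ x))) :=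
    (hgmeas.comp hT).sqrt
  have hgT_sm : StronglyMeasurable[sigmaT d r Ur] (fun x : Fin d → ℝ => Real.sqrt (g (Urᵀ *ᵥ x))) := by
    have hmm : Measurable[sigmaT d r Ur] (fun x : Fin d → ℝ => g (Urᵀ *ᵥ x)) :=
      hgmeas.comp (comap_measurable _)
    exact (Measurable.sqrt hmm).stronglyMeasurable
  have hgT2int : Integrable (fun x => Real.sqrt (g (Urᵀ *ᵥ x)) ^ 2) μ := by
    have : (fun x => Real.sqrt (g (Urᵀ *ᵥ x)) ^ 2) = fun x => g (Urᵀ *ᵥ x) := by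
      funext x; exact Real.sq_sqrt (hgpos _)
    rw [this]; exact hgint
  have hgTs_int : Integrable (fun x => Real.sqrt (g (Urᵀ *ᵥ x)) * Real.sqrt (ℓ x)) μ :=
    aux_int_mul hgT_meas.aestronglyMeasurable hs_meas.aestronglyMeasurable hgT2int hs2int
  have hpullg : ∫ x, Real.sqrt (g (Urᵀ *ᵥ x)) * Real.sqrt (ℓ x) ∂μ
      = ∫ x, Real.sqrt (g (Urᵀ *ᵥ x)) * F x ∂μ := pull _ hgT_sm hgTs_int
  -- Cauchy–Schwarz
  have hgTL2 : MemLp (fun x : Fin d → ℝ => Real.sqrt (g (Urᵀ *ᵥ x))) (ENNReal.ofReal 2) μ := by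
    rw [hofReal2]
    exact (memLp_two_iff_integrable_sq hgT_meas.aestronglyMeasurable).mpr hgT2int
  have hcs2 : ∫ x, Real.sqrt (g (Urᵀ *ᵥ x)) * F x ∂μ ≤ Real.sqrt Z * Real.sqrt C := by
    have h := integral_mul_le_Lp_mul_Lq_of_nonneg (μ := μ) h22
      (Filter.Eventually.of_forall fun x => Real.sqrt_nonneg _) hF_nonneg hgTL2 hFL2
    rw [rpow_two, rpow_two] at h
    have hZeq : (∫ x, Real.sqrt (g (Urᵀ *ᵥ x)) ^ (2:ℕ) ∂μ) = Z := by
      rw [hZdef]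
      exact integral_congr_ae (Filter.Eventually.of_forall fun x => Real.sq_sqrt (hgpos _))
    have hCeq : (∫ x, F x ^ (2:ℕ) ∂μ) = C := rfl
    rw [hZeq, hCeq, ← Real.sqrt_eq_rpow, ← Real.sqrt_eq_rpow] at h
    exact h
  -- expansion for the F-side
  have hexp1 : ∫ x, (Real.sqrt (ℓ x) - Real.sqrt ((F x) ^ 2 / C)) ^ 2 ∂μ
      = (∫ x, ℓ x ∂μ) + (∫ x, (F x) ^ 2 / C ∂μ)
        - 2 * ∫ x, Real.sqrt (ℓ x) * Real.sqrt ((F x) ^ 2 / C) ∂μ :=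
    aux_expand hℓpos (fun x => div_nonneg (sq_nonneg _) hC_pos.le) hℓint
      (hF2int.div_const C) hint1
  have hmean1 : (∫ x, (F x) ^ 2 / C ∂μ) = 1 := by
    rw [integral_div, ← hCdef, div_self hC_pos.ne']
  have hcross1 : ∫ x, Real.sqrt (ℓ x) * Real.sqrt ((F x) ^ 2 / C) ∂μ = Real.sqrt C := by
    have e : (fun x => Real.sqrt (ℓ x) * Real.sqrt ((F x) ^ 2 / C))
        =ᵐ[μ] fun x => (F x * Real.sqrt (ℓ x)) / Real.sqrt C := by
      filter_upwards [hF_nonneg] with x hx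
      rw [Real.sqrt_div (sq_nonneg _), Real.sqrt_sq hx]
      ring
    rw [integral_congr_ae e, integral_div, hFs, Real.div_sqrt]
  -- expansion for the g-side
  have hexp2 : ∫ x, (Real.sqrt (ℓ x) - Real.sqrt (g (Urᵀ *ᵥ x) / Z)) ^ 2 ∂μ
      = (∫ x, ℓ x ∂μ) + (∫ x, g (Urᵀ *ᵥ x) / Z ∂μ)
        - 2 * ∫ x, Real.sqrt (ℓ x) * Real.sqrt (g (Urᵀ *ᵥ x) / Z) ∂μ :=
    aux_expand hℓpos (fun x => div_nonneg (hgpos _) hZ.le) hℓint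
      (hgint.div_const Z) hint2
  have hmean2 : (∫ x, g (Urᵀ *ᵥ x) / Z ∂μ) = 1 := by
    rw [integral_div, ← hZdef, div_self hZ.ne']
  have hcross2 : ∫ x, Real.sqrt (ℓ x) * Real.sqrt (g (Urᵀ *ᵥ x) / Z) ∂μ ≤ Real.sqrt C := by
    have e : (fun x => Real.sqrt (ℓ x) * Real.sqrt (g (Urᵀ *ᵥ x) / Z))
        = fun x => (Real.sqrt (g (Urᵀ *ᵥ x)) * Real.sqrt (ℓ x)) / Real.sqrt Z := by
      funext x
      rw [Real.sqrt_div (hgpos _)]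
      ring
    rw [e, integral_div, hpullg]
    have hZs : 0 < Real.sqrt Z := Real.sqrt_pos.mpr hZ
    calc (∫ x, Real.sqrt (g (Urᵀ *ᵥ x)) * F x ∂μ) / Real.sqrt Z
        ≤ (Real.sqrt Z * Real.sqrt C) / Real.sqrt Z := (div_le_div_iff_of_pos_right hZs).mpr hcs2
      _ = Real.sqrt C := by
          rw [mul_comm, mul_div_assoc, div_self hZs.ne', mul_one]
  rw [hexp1, hmean1, hnorm, hcross1, hexp2, hmean2, hnorm]
  linarith [hcross2]
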